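/- Let a, b, c, d be real constants with c ≠ 0 and consider H(x, y) = (exp(c(y+d)) + 2a)/(c(b − ax)) on any open set where b − ax ≠ 0. Then H satisfies the PDE −H·H_yy + (H_y)² + 2·H_xy = 0, where subscripts denote partial derivatives. -/

import Mathlib

lemma stmt_12_aux (a b c d : ℝ) (x y : ℝ) :
    HasDerivAt (fun y => (Real.exp (c * (y + d)) + 2 * a) / (c * (b - a * x)))
      (Real.exp (c * (y + d)) * (c * 1) / (c * (b - a * x))) y := by
  have h1 : HasDerivAt (fun y : ℝ => c * (y + d)) (c * 1) y :=
    ((hasDerivAt_id y).add_const d).const_mul c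
  have h2 : HasDerivAt (fun y : ℝ => Real.exp (c * (y + d)))
      (Real.exp (c * (y + d)) * (c * 1)) y :=
    by have := (Real.hasDerivAt_exp (c * (y + d))).comp y h1; exact this
  exact (h2.add_const (2 * a)).div_const _

/-- `H(x,y) = (exp(c(y+d)) + 2a)/(c(b − ax))` solves `−H·H_yy + (H_y)² + 2·H_xy = 0`
wherever `b − ax ≠ 0`. -/
theorem stmt_12 (a b c d : ℝ) (hc : c ≠ 0) :
    ∀ x y : ℝ, b - a * x ≠ 0 →
      -((Real.exp (c * (y + d)) + 2 * a) / (c * (b - a * x))) *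
          deriv (deriv (fun y => (Real.exp (c * (y + d)) + 2 * a) / (c * (b - a * x)))) y
      + (deriv (fun y => (Real.exp (c * (y + d)) + 2 * a) / (c * (b - a * x))) y) ^ 2
      + 2 * deriv (fun x =>
            deriv (fun y => (Real.exp (c * (y + d)) + 2 * a) / (c * (b - a * x))) y) x
      = 0 := by
  intro x y hx
  have hd1 : ∀ x' y' : ℝ,
      deriv (fun y => (Real.exp (c * (y + d)) + 2 * a) / (c * (b - a * x'))) y'
        = Real.exp (c * (y' + d)) * (c * 1) / (c * (b - a * x')) :=
    fun x' y' => (stmt_12_aux a b c d x' y').deriv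
  -- second y-derivative
  have hd2 : deriv (deriv (fun y => (Real.exp (c * (y + d)) + 2 * a) / (c * (b - a * x)))) y
      = Real.exp (c * (y + d)) * (c * 1) * (c * 1) / (c * (b - a * x)) := by
    have heq : deriv (fun y => (Real.exp (c * (y + d)) + 2 * a) / (c * (b - a * x)))
        = fun y => Real.exp (c * (y + d)) * (c * 1) / (c * (b - a * x)) :=
      funext fun y' => hd1 x y'
    rw [heq]
    have h1 : HasDerivAt (fun y : ℝ => c * (y + d)) (c * 1) y :=
      ((hasDerivAt_id y).add_const d).const_mul c
    have h2 : HasDerivAt (fun y : ℝ => Real.exp (c * (y + d)))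
        (Real.exp (c * (y + d)) * (c * 1)) y :=
      by have := (Real.hasDerivAt_exp (c * (y + d))).comp y h1; exact this
    exact ((h2.mul_const (c * 1)).div_const _).deriv
  -- mixed derivative
  have hd3 : deriv (fun x =>
      deriv (fun y => (Real.exp (c * (y + d)) + 2 * a) / (c * (b - a * x))) y) x
      = (0 * (c * (b - a * x)) - Real.exp (c * (y + d)) * (c * 1) * (c * (0 - a * 1)))
          / (c * (b - a * x)) ^ 2 := by
    have heq : (fun x =>
        deriv (fun y => (Real.exp (c * (y + d)) + 2 * a) / (c * (b - a * x))) y)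
        = fun x => Real.exp (c * (y + d)) * (c * 1) / (c * (b - a * x)) :=
      funext fun x' => hd1 x' y
    rw [heq]
    have hden : HasDerivAt (fun x : ℝ => c * (b - a * x)) (c * (0 - a * 1)) x :=
      ((hasDerivAt_const x b).sub ((hasDerivAt_id x).const_mul a)).const_mul c
    have hnum : HasDerivAt (fun _ : ℝ => Real.exp (c * (y + d)) * (c * 1)) 0 x :=
      hasDerivAt_const x _
    have hne : c * (b - a * x) ≠ 0 := mul_ne_zero hc hx
    exact (hnum.div hden hne).deriv
  rw [hd1 x y, hd2, hd3]
  have hne : c * (b - a * x) ≠ 0 := mul_ne_zero hc hx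
  field_simp
  ring
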